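/- The image of the polynomial map g : ℝ² → ℝ², (x, y) ↦ ((xy − 1)² + x², y(xy − 1)), is the open half-plane (0, ∞) × ℝ. -/

import Mathlib

/-- The image of g(x,y) = ((xy−1)² + x², y(xy−1)) is the open half-plane
(0,∞) × ℝ. -/
theorem stmt_19 :
    Set.range (fun p : ℝ × ℝ =>
        ((p.1 * p.2 - 1) ^ 2 + p.1 ^ 2, p.2 * (p.1 * p.2 - 1))) =
      Set.Ioi (0 : ℝ) ×ˢ (Set.univ : Set ℝ) := by
  ext ⟨u, v⟩
  simp only [Set.mem_range, Set.mem_prod, Set.mem_Ioi, Set.mem_univ, and_true, Prod.mk.injEq,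
    Prod.exists]
  constructor
  · rintro ⟨x, y, h1, h2⟩
    rcases eq_or_ne x 0 with hx | hx
    · subst hx; nlinarith
    · nlinarith [sq_nonneg (x * y - 1), sq_pos_of_ne_zero hx]
  · intro hu
    rcases eq_or_ne v 0 with hv | hv
    · refine ⟨Real.sqrt u, 1 / Real.sqrt u, ?_, ?_⟩
      all_goals have hs : Real.sqrt u ≠ 0 := by positivity
      all_goals have h1 : Real.sqrt u * (1 / Real.sqrt u) = 1 := by field_simp
      · rw [h1]; simp [Real.sq_sqrt hu.le]
      · rw [h1]; simp [hv]
    · have hv2 : 0 < u * v ^ 2 := by positivity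
      set M : ℝ := 1 + u * v ^ 2 with hM
      have hM1 : (1 : ℝ) ≤ M := by nlinarith
      have hf : Continuous fun t : ℝ => t ^ 2 * ((t + 1) ^ 2 + v ^ 2) := by continuity
      have key : ∃ t ∈ Set.Icc (0 : ℝ) M,
          (fun t : ℝ => t ^ 2 * ((t + 1) ^ 2 + v ^ 2)) t = u * v ^ 2 := by
        apply intermediate_value_Icc (by linarith : (0:ℝ) ≤ M) hf.continuousOn
        constructor
        · show 0 ^ 2 * ((0 + 1) ^ 2 + v ^ 2) ≤ u * v ^ 2
          nlinarith
        · show u * v ^ 2 ≤ M ^ 2 * ((M + 1) ^ 2 + v ^ 2)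
          nlinarith [sq_nonneg v, sq_nonneg (M - 1)]
      obtain ⟨t, ht, hft⟩ := key
      simp only at hft
      have htpos : 0 < t := by
        rcases lt_or_eq_of_le ht.1 with h | h
        · exact h
        · exfalso; rw [← h] at hft; simp at hft
          rcases hft with h' | h'
          · linarith
          · exact hv h'
      refine ⟨t * (t + 1) / v, v / t, ?_, ?_⟩
      · field_simp
        nlinarith [hft]
      · field_simp; ring
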